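/- Combining the entropy approximation with Parseval: for a probability distribution f on GF(2)ⁿ with f(i) = 2^{-n} + u_i and 2ⁿ|u_i| ≤ 1/2 for all i, the deficiency from maximal entropy satisfies n - H(f) = (1/(2 log 2)) ∑_{m ≠ 0} f̂(m)² + O(2^{2n} ∑_i |u_i|³). -/

import Mathlib

open Finset

/-- The `(-1)^{⟨i,j⟩}` sign, where `⟨i,j⟩` is the GF(2) inner product. -/
noncomputable def walshChar {n : ℕ} (i j : Fin n → ZMod 2) : ℝ :=
  (-1 : ℝ) ^ ((∑ k, i k * j k : ZMod 2)).val

/-- Walsh transform of `f : GF(2)ⁿ → ℝ`. -/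
noncomputable def walsh {n : ℕ} (f : (Fin n → ZMod 2) → ℝ) (i : Fin n → ZMod 2) : ℝ :=
  ∑ j, walshChar i j * f j

/-- Base-2 Shannon entropy of a distribution on GF(2)ⁿ (with `0 log 0 = 0`,
as guaranteed by `Real.logb`'s junk value `logb 2 0 = 0`). -/
noncomputable def shannonEnt {n : ℕ} (f : (Fin n → ZMod 2) → ℝ) : ℝ :=
  -∑ i, f i * Real.logb 2 (f i)

lemma zv0 : (ZMod.val (0:ZMod 2)) = 0 := rfl
lemma zv1 : (ZMod.val (1:ZMod 2)) = 1 := rfl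
lemma zv2 : (ZMod.val (2:ZMod 2)) = 0 := rfl

lemma zmod2_pow_add (a b : ZMod 2) :
    ((-1:ℝ))^(a+b).val = (-1:ℝ)^a.val * (-1:ℝ)^b.val := by
  have h : ∀ x : ZMod 2, x = 0 ∨ x = 1 := by decide
  rcases h a with rfl | rfl <;> rcases h b with rfl | rfl <;> norm_num [zv0, zv1, zv2]

lemma walshChar_add_left {n : ℕ} (i i' j : Fin n → ZMod 2) :
    walshChar (i + i') j = walshChar i j * walshChar i' j := by
  unfold walshChar
  rw [show (∑ k, (i + i') k * j k) = (∑ k, i k * j k) + ∑ k, i' k * j k by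
    rw [← Finset.sum_add_distrib]; exact Finset.sum_congr rfl fun k _ => by
      simp [add_mul]]
  exact zmod2_pow_add _ _

lemma walshChar_comm {n : ℕ} (i j : Fin n → ZMod 2) :
    walshChar i j = walshChar j i := by
  unfold walshChar
  congr 1
  exact congrArg _ (Finset.sum_congr rfl fun k _ => mul_comm _ _)

lemma walshChar_zero_left {n : ℕ} (j : Fin n → ZMod 2) : walshChar 0 j = 1 := by
  simp [walshChar]

lemma sum_walshChar {n : ℕ} (a : Fin n → ZMod 2) :
    ∑ m, walshChar m a = if a = 0 then (2:ℝ)^n else 0 := by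
  by_cases ha : a = 0
  · subst ha
    simp only [if_pos rfl]
    have : ∀ m : Fin n → ZMod 2, walshChar m 0 = 1 := by
      intro m; rw [walshChar_comm]; exact walshChar_zero_left m
    rw [Finset.sum_congr rfl fun m _ => this m]
    simp [Finset.card_univ]
  · rw [if_neg ha]
    obtain ⟨k, hk⟩ := Function.ne_iff.mp ha
    have hone : ∀ c : ZMod 2, c ≠ 0 → c = 1 := by decide
    have hak : a k = 1 := hone _ hk
    set e : Fin n → ZMod 2 := Pi.single k 1 with he
    have hchar : walshChar e a = -1 := by
      unfold walshChar
      have : (∑ k', e k' * a k') = a k := by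
        rw [Finset.sum_eq_single k]
        · simp [he]
        · intro b _ hb; simp [he, Pi.single_eq_of_ne hb]
        · simp
      rw [this, hak, zv1]
      norm_num
    have key : ∀ m, walshChar (m + e) a = - walshChar m a := by
      intro m; rw [walshChar_add_left, hchar]; ring
    have h2 : ∑ m, walshChar (m + e) a = ∑ m, walshChar m a :=
      Fintype.sum_equiv (Equiv.addRight e) _ _ (fun m => rfl)
    have h3 : ∑ m, walshChar (m + e) a = -∑ m, walshChar m a := by
      simp [key]
    linarith [h2, h3]


lemma pi_add_eq_zero_iff {n : ℕ} (a b : Fin n → ZMod 2) : a + b = 0 ↔ a = b := by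
  have h : ∀ x y : ZMod 2, x + y = 0 ↔ x = y := by decide
  constructor
  · intro hab; funext k
    exact (h _ _).mp (congrFun hab k)
  · intro hab; subst hab; funext k
    exact (h _ _).mpr rfl

lemma parseval {n : ℕ} (u : (Fin n → ZMod 2) → ℝ) :
    ∑ m, walsh u m ^ 2 = (2:ℝ)^n * ∑ j, u j ^ 2 := by
  have expand : ∀ m, walsh u m ^ 2
      = ∑ j, ∑ j', walshChar m (j + j') * (u j * u j') := by
    intro m
    rw [sq, walsh, Finset.sum_mul_sum]
    refine Finset.sum_congr rfl fun j _ => Finset.sum_congr rfl fun j' _ => ?_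
    rw [walshChar_comm m (j + j'), walshChar_add_left, walshChar_comm j m,
      walshChar_comm j' m]
    ring
  calc ∑ m, walsh u m ^ 2
      = ∑ j, ∑ j', (∑ m, walshChar m (j + j')) * (u j * u j') := by
        rw [Finset.sum_congr rfl fun m _ => expand m, Finset.sum_comm]
        refine Finset.sum_congr rfl fun j _ => ?_
        rw [Finset.sum_comm]
        refine Finset.sum_congr rfl fun j' _ => ?_
        rw [Finset.sum_mul]
    _ = ∑ j, ∑ j', (if j' = j then (2:ℝ)^n else 0) * (u j * u j') := by
        refine Finset.sum_congr rfl fun j _ => Finset.sum_congr rfl fun j' _ => ?_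
        rw [sum_walshChar]
        have : j + j' = 0 ↔ j' = j := by rw [pi_add_eq_zero_iff]; exact eq_comm
        simp [this]
    _ = (2:ℝ)^n * ∑ j, u j ^ 2 := by
        rw [Finset.mul_sum]
        refine Finset.sum_congr rfl fun j _ => ?_
        simp only [ite_mul, zero_mul]
        rw [Finset.sum_ite_eq' univ j (fun j' => (2:ℝ)^n * (u j * u j'))]
        simp [sq, mul_assoc]

lemma walsh_shift {n : ℕ} (f u : (Fin n → ZMod 2) → ℝ)
    (hf : ∀ i, f i = ((2:ℝ)^n)⁻¹ + u i) (m : Fin n → ZMod 2) (hm : m ≠ 0) :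
    walsh f m = walsh u m := by
  unfold walsh
  have h1 : ∑ j, walshChar m j * f j
      = ((2:ℝ)^n)⁻¹ * (∑ j, walshChar m j) + ∑ j, walshChar m j * u j := by
    rw [Finset.mul_sum, ← Finset.sum_add_distrib]
    refine Finset.sum_congr rfl fun j _ => ?_
    rw [hf j]; ring
  have h2 : (∑ j, walshChar m j) = 0 := by
    have : (∑ j, walshChar m j) = ∑ j, walshChar j m :=
      Finset.sum_congr rfl fun j _ => walshChar_comm m j
    rw [this, sum_walshChar, if_neg hm]
  rw [h1, h2]; ring

lemma walsh_zero {n : ℕ} (u : (Fin n → ZMod 2) → ℝ) :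
    walsh u 0 = ∑ j, u j := by
  unfold walsh
  refine Finset.sum_congr rfl fun j _ => ?_
  rw [walshChar_zero_left, one_mul]

lemma sum_walsh_sq_ne_zero {n : ℕ} (f u : (Fin n → ZMod 2) → ℝ)
    (hf : ∀ i, f i = ((2:ℝ)^n)⁻¹ + u i) (hu : (∑ i, u i) = 0) :
    ∑ m ∈ univ.filter (· ≠ (0 : Fin n → ZMod 2)), walsh f m ^ 2
      = (2:ℝ)^n * ∑ j, u j ^ 2 := by
  have h1 : ∑ m ∈ univ.filter (· ≠ (0 : Fin n → ZMod 2)), walsh f m ^ 2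
      = ∑ m ∈ univ.filter (· ≠ (0 : Fin n → ZMod 2)), walsh u m ^ 2 := by
    refine Finset.sum_congr rfl fun m hm => ?_
    rw [walsh_shift f u hf m (by simpa using hm)]
  rw [h1]
  have h2 : univ.filter (· ≠ (0 : Fin n → ZMod 2)) = univ.erase 0 :=
    Finset.filter_ne' univ 0
  rw [h2]
  have h3 : ∑ m ∈ univ.erase 0, walsh u m ^ 2 + walsh u 0 ^ 2 = ∑ m, walsh u m ^ 2 :=
    Finset.sum_erase_add univ _ (Finset.mem_univ 0)
  have h4 : walsh u 0 = 0 := by rw [walsh_zero, hu]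
  rw [parseval] at h3
  rw [h4] at h3
  linarith

lemma log_taylor (y : ℝ) (hy : |y| ≤ 1/2) :
    |Real.log (1+y) - (y - y^2/2)| ≤ 2 * |y|^3 := by
  have h := Real.abs_log_sub_add_sum_range_le (x := -y) (by rw [abs_neg]; linarith) 2
  have hs : (∑ i ∈ Finset.range 2, (-y)^(i+1)/(i+1)) = -y + y^2/2 := by
    simp [Finset.sum_range_succ]; ring
  rw [hs, abs_neg] at h
  have h1 : 1 - (1:ℝ) - (-y) = y := by ring
  have : |(-y + y^2/2) + Real.log (1 - -y)| ≤ |y|^3 / (1 - |y|) := by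
    simpa using h
  have hle : |y|^3 / (1 - |y|) ≤ 2 * |y|^3 := by
    rw [div_le_iff₀ (by linarith)]
    nlinarith [abs_nonneg y, pow_nonneg (abs_nonneg y) 3]
  have heq : Real.log (1+y) - (y - y^2/2) = (-y + y^2/2) + Real.log (1 - -y) := by
    ring_nf
  rw [heq]
  linarith

lemma key_pointwise (y : ℝ) (hy : |y| ≤ 1/2) :
    |(1+y) * Real.log (1+y) - y - y^2/2| ≤ 4 * |y|^3 := by
  have h := log_taylor y hy
  have hy1 : |1 + y| ≤ 3/2 := by
    rw [abs_le] at hy ⊢; constructor <;> linarith [hy.1, hy.2]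
  have heq : (1+y) * Real.log (1+y) - y - y^2/2
      = (1+y) * (Real.log (1+y) - (y - y^2/2)) + (- y^3/2) := by ring
  rw [heq]
  have h1 : |(1+y) * (Real.log (1+y) - (y - y^2/2))| ≤ (3/2) * (2 * |y|^3) := by
    rw [abs_mul]
    exact mul_le_mul hy1 h (abs_nonneg _) (by norm_num)
  have h2 : |(- y^3/2)| ≤ |y|^3 / 2 := by
    rw [abs_div, abs_neg, abs_pow]; norm_num
  calc |(1+y) * (Real.log (1+y) - (y - y^2/2)) + (- y^3/2)|
      ≤ |(1+y) * (Real.log (1+y) - (y - y^2/2))| + |(- y^3/2)| := abs_add_le _ _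
    _ ≤ (3/2) * (2 * |y|^3) + |y|^3/2 := by linarith
    _ ≤ 4 * |y|^3 := by nlinarith [abs_nonneg y, pow_nonneg (abs_nonneg y) 3]

/-- Entropy deficiency in terms of Walsh coefficients: for a near-uniform
distribution `f(i) = 2⁻ⁿ + uᵢ` with `2ⁿ|uᵢ| ≤ 1/2`,
`n - H(f) = (1/(2 log 2)) ∑_{m ≠ 0} f̂(m)² + O(2^{2n} ∑ |uᵢ|³)`. -/
theorem entropy_deficiency_walsh (n : ℕ) :
    ∃ c : ℝ, ∀ (f u : (Fin n → ZMod 2) → ℝ),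
      (∀ i, f i = ((2 : ℝ) ^ n)⁻¹ + u i) →
      (∑ i, u i) = 0 →
      (∀ i, (2 : ℝ) ^ n * |u i| ≤ 1 / 2) →
      |(n - shannonEnt f) -
          (1 / (2 * Real.log 2)) *
            ∑ m ∈ univ.filter (· ≠ (0 : Fin n → ZMod 2)), walsh f m ^ 2| ≤
        c * (2 : ℝ) ^ (2 * n) * ∑ i, |u i| ^ 3 := by
  set L := Real.log 2 with hLdef
  have hL : 0 < L := Real.log_pos (by norm_num)
  refine ⟨4 / L, fun f u hf hu hb => ?_⟩
  set N : ℝ := (2:ℝ)^n with hNdef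
  have hN : 0 < N := by positivity
  set x : (Fin n → ZMod 2) → ℝ := fun i => N * u i with hxdef
  have hx : ∀ i, |x i| ≤ 1/2 := by
    intro i
    have : |x i| = N * |u i| := by
      rw [hxdef]; rw [abs_mul, abs_of_pos hN]
    rw [this]; exact hb i
  have hxf : ∀ i, f i = N⁻¹ * (1 + x i) := by
    intro i
    rw [hf i, hxdef]
    field_simp
  have hfpos : ∀ i, 0 < f i := by
    intro i
    rw [hxf i]
    have := hx i
    rw [abs_le] at this
    have : (0:ℝ) < 1 + x i := by linarith [this.1]
    positivity
  have hsumx : ∑ i, x i = 0 := by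
    rw [hxdef]; simp only [← Finset.mul_sum, hu, mul_zero]
  have hcard : (Fintype.card (Fin n → ZMod 2) : ℝ) = N := by
    rw [hNdef]; simp
  -- entropy identity
  have hlogb : ∀ i, (n:ℝ) + Real.logb 2 (f i) = Real.log (1 + x i) / L := by
    intro i
    have h1x : (0:ℝ) < 1 + x i := by
      have := hx i; rw [abs_le] at this; linarith [this.1]
    rw [hxf i, Real.logb_mul (by positivity) (by positivity)]
    have hinv : Real.logb 2 N⁻¹ = -(n:ℝ) := by
      rw [Real.logb_inv, hNdef, Real.logb_pow]
      simp [Real.logb_self_eq_one]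
    rw [hinv, Real.logb, hLdef]
    ring
  have hsumf : ∑ i, f i = 1 := by
    have : ∑ i, f i = ∑ i, (N⁻¹ + u i) := by
      refine Finset.sum_congr rfl fun i _ => ?_
      rw [hf i, hNdef]
    rw [this, Finset.sum_add_distrib, hu, Finset.sum_const, add_zero,
      Finset.card_univ, nsmul_eq_mul, hcard]
    field_simp
  have hent : (n:ℝ) - shannonEnt f = ∑ i, f i * (Real.log (1 + x i) / L) := by
    unfold shannonEnt
    have h1 : ∑ i, f i * (Real.log (1 + x i) / L)
        = ∑ i, (f i * (n:ℝ) + f i * Real.logb 2 (f i)) := by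
      refine Finset.sum_congr rfl fun i _ => ?_
      rw [← hlogb i]; ring
    rw [h1, Finset.sum_add_distrib, ← Finset.sum_mul, hsumf]
    ring
  -- main rewrite
  set g : (Fin n → ZMod 2) → ℝ :=
    fun i => (1 + x i) * Real.log (1 + x i) - x i - (x i)^2/2 with hgdef
  have hA : (↑n - shannonEnt f) -
      (1 / (2 * L)) * ∑ m ∈ univ.filter (· ≠ (0 : Fin n → ZMod 2)), walsh f m ^ 2
      = ∑ i, (N⁻¹ / L) * g i := by
    rw [sum_walsh_sq_ne_zero f u hf hu, hent]
    have hrw : (1 / (2 * L)) * ((2:ℝ)^n * ∑ j, u j ^ 2)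
        = ∑ j, N⁻¹ * (x j)^2 / (2*L) := by
      rw [← hNdef, show (N * ∑ j, u j ^ 2) = ∑ j, N * u j ^ 2 from Finset.mul_sum _ _ _,
        Finset.mul_sum]
      refine Finset.sum_congr rfl fun j _ => ?_
      rw [hxdef]
      field_simp
    rw [hrw]
    have hzero : ∑ i, (N⁻¹ / L) * x i = 0 := by
      rw [← Finset.mul_sum, hsumx, mul_zero]
    rw [← sub_zero (∑ i, f i * (Real.log (1 + x i) / L) - ∑ j, N⁻¹ * (x j)^2 / (2*L)),
      ← hzero, ← Finset.sum_sub_distrib, ← Finset.sum_sub_distrib]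
    refine Finset.sum_congr rfl fun i _ => ?_
    rw [hxf i, hgdef]
    field_simp
    ring
  rw [hA]
  have hbd : ∀ i, |(N⁻¹ / L) * g i| ≤ (N⁻¹ / L) * (4 * |x i|^3) := by
    intro i
    rw [abs_mul, abs_of_pos (by positivity : (0:ℝ) < N⁻¹ / L)]
    exact mul_le_mul_of_nonneg_left (key_pointwise (x i) (hx i)) (by positivity)
  calc |∑ i, (N⁻¹ / L) * g i| ≤ ∑ i, |(N⁻¹ / L) * g i| :=
        Finset.abs_sum_le_sum_abs _ _
    _ ≤ ∑ i, (N⁻¹ / L) * (4 * |x i|^3) := Finset.sum_le_sum fun i _ => hbd i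
    _ = 4 / L * (2:ℝ)^(2*n) * ∑ i, |u i|^3 := by
        have h2n : (2:ℝ)^(2*n) = N^2 := by
          rw [hNdef, two_mul, pow_add, sq]
        rw [mul_assoc, show ((2:ℝ)^(2*n) * ∑ i, |u i|^3) = ∑ i, (2:ℝ)^(2*n) * |u i|^3
          from Finset.mul_sum _ _ _, Finset.mul_sum]
        refine Finset.sum_congr rfl fun i _ => ?_
        have hxabs : |x i|^3 = N^3 * |u i|^3 := by
          rw [hxdef]
          simp only
          rw [abs_mul, abs_of_pos hN, mul_pow]
        rw [hxabs, h2n]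
        field_simp
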